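/- If 1, θ, α₁, θ·α₂ are linearly independent over ℚ, then S is dense in ℝ × (ℝ/ℤ) × (ℝ/ℤ). -/

import Mathlib

/-- The set `S = { (m − k·θ, k·α₁ mod 1, m·α₂ mod 1) : k, m ∈ ℕ }` in
`ℝ × (ℝ/ℤ) × (ℝ/ℤ)`. -/
def Sset (θ α₁ α₂ : ℝ) : Set (ℝ × AddCircle (1 : ℝ) × AddCircle (1 : ℝ)) :=
  {x | ∃ k m : ℕ, x = ((m : ℝ) - (k : ℝ) * θ,
    (((k : ℝ) * α₁ : ℝ) : AddCircle (1 : ℝ)),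
    (((m : ℝ) * α₂ : ℝ) : AddCircle (1 : ℝ)))}

open Module Submodule Set Function Metric

section Line

variable {E : Type} [NormedAddCommGroup E] [NormedSpace ℝ E]

/-- A closed subgroup that is not uniformly discrete contains a whole line. -/
lemma exists_line_of_not_discrete [FiniteDimensional ℝ E] {H : AddSubgroup E}
    (hc : IsClosed (H : Set E))
    (hnd : ∀ ε : ℝ, 0 < ε → ∃ h ∈ H, h ≠ 0 ∧ ‖h‖ < ε) :
    ∃ u : E, u ≠ 0 ∧ ∀ t : ℝ, t • u ∈ H := by
  choose h hmem hne hlt using fun n : ℕ => hnd (1 / (n + 1)) (by positivity)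
  have hnorm : ∀ n, (0:ℝ) < ‖h n‖ := fun n => norm_pos_iff.2 (hne n)
  set u : ℕ → E := fun n => ‖h n‖⁻¹ • h n with hu_def
  have hu : ∀ n, u n ∈ sphere (0:E) 1 := by
    intro n
    simp [hu_def, norm_smul, inv_mul_cancel₀ (norm_ne_zero_iff.2 (hne n))]
  obtain ⟨v, hv, φ, hφ, hconv⟩ := (isCompact_sphere (0:E) 1).tendsto_subseq hu
  have hvne : v ≠ 0 := by
    intro h0
    rw [h0] at hv
    simp at hv
  refine ⟨v, hvne, fun t => ?_⟩
  -- the norms along the subsequence tend to 0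
  have hnlim : Filter.Tendsto (fun n => ‖h (φ n)‖) Filter.atTop (nhds 0) := by
    have h1 : Filter.Tendsto (fun n : ℕ => 1 / ((n : ℝ) + 1)) Filter.atTop (nhds 0) :=
      tendsto_one_div_add_atTop_nhds_zero_nat
    refine squeeze_zero (fun n => (hnorm _).le) (fun n => ?_) h1
    refine le_trans (hlt (φ n)).le ?_
    have : (n:ℝ) + 1 ≤ (φ n : ℝ) + 1 := by
      have h3 : n ≤ φ n := hφ.le_apply
      push_cast
      exact add_le_add_left (Nat.cast_le.2 h3) 1
    apply div_le_div_of_nonneg_left (by norm_num) (by positivity) this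
  -- approximants
  set z : ℕ → ℤ := fun n => round (t / ‖h (φ n)‖) with hz
  have hmemz : ∀ n, (z n) • h (φ n) ∈ H := fun n => zsmul_mem (hmem (φ n)) _
  have heq : ∀ n, (z n) • h (φ n) = ((z n : ℝ) * ‖h (φ n)‖) • u (φ n) := by
    intro n
    rw [hu_def]
    rw [smul_smul, mul_assoc, mul_inv_cancel₀ (hnorm (φ n)).ne', mul_one, Int.cast_smul_eq_zsmul]
  have hslim : Filter.Tendsto (fun n => (z n : ℝ) * ‖h (φ n)‖) Filter.atTop (nhds t) := by
    have hbound : ∀ n, |(z n : ℝ) * ‖h (φ n)‖ - t| ≤ ‖h (φ n)‖ := by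
      intro n
      have h1 : |t / ‖h (φ n)‖ - (z n : ℝ)| ≤ 1 := by
        rw [hz]
        exact (abs_sub_round _).trans (by norm_num)
      have h2 : |(z n : ℝ) * ‖h (φ n)‖ - t| = |t / ‖h (φ n)‖ - (z n : ℝ)| * ‖h (φ n)‖ := by
        have e1 : |t / ‖h (φ n)‖ - (z n : ℝ)| * ‖h (φ n)‖
            = |(t / ‖h (φ n)‖ - (z n : ℝ)) * ‖h (φ n)‖| := by
          rw [abs_mul, abs_of_pos (hnorm (φ n))]
        rw [e1, sub_mul, div_mul_cancel₀ _ (hnorm (φ n)).ne', abs_sub_comm]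
      rw [h2]
      calc |t / ‖h (φ n)‖ - (z n : ℝ)| * ‖h (φ n)‖ ≤ 1 * ‖h (φ n)‖ := by
            apply mul_le_mul_of_nonneg_right h1 (norm_nonneg _)
        _ = ‖h (φ n)‖ := one_mul _
    have : Filter.Tendsto (fun n => (z n : ℝ) * ‖h (φ n)‖ - t) Filter.atTop (nhds 0) := by
      refine squeeze_zero_norm (fun n => ?_) hnlim
      simpa using hbound n
    simpa using this.add_const t
  have : Filter.Tendsto (fun n => (z n) • h (φ n)) Filter.atTop (nhds (t • v)) := by
    simp only [heq]
    exact hslim.smul hconv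
  exact hc.mem_of_tendsto this (Filter.Eventually.of_forall hmemz)

end Line

section Char

/-- Any proper closed subgroup of a finite-dimensional real vector space is annihilated by a
nonzero linear functional taking integer values on it. -/
lemma exists_int_char : ∀ (n : ℕ) (E : Type) [NormedAddCommGroup E] [NormedSpace ℝ E]
    [FiniteDimensional ℝ E], finrank ℝ E = n → ∀ (H : AddSubgroup E), IsClosed (H : Set E) →
    H ≠ ⊤ → ∃ f : E →ₗ[ℝ] ℝ, f ≠ 0 ∧ ∀ h ∈ H, ∃ z : ℤ, f h = z := by
  intro n
  induction n using Nat.strong_induction_on with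
  | _ n IH =>
  intro E _ _ _ hrank H hc hne
  by_cases hd : ∀ ε : ℝ, 0 < ε → ∃ h ∈ H, h ≠ 0 ∧ ‖h‖ < ε
  · -- H contains a line; project it away and induct
    obtain ⟨u, hu0, hline⟩ := exists_line_of_not_discrete hc hd
    set U : Submodule ℝ E := span ℝ {u} with hU
    obtain ⟨W, hcompl⟩ := Submodule.exists_isCompl U
    have hUH : ∀ x ∈ U, x ∈ H := by
      intro x hx
      obtain ⟨t, rfl⟩ := mem_span_singleton.1 hx
      exact hline t
    set projW := W.projectionOnto U hcompl.symm with hprojW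
    set projU := U.projectionOnto W hcompl with hprojU
    have hsum : ∀ x : E, (projU x : E) + (projW x : E) = x :=
      fun x => Submodule.projection_add_projection_eq_self hcompl x
    set H' : AddSubgroup W := H.comap W.subtype.toAddMonoidHom with hH'
    have hprojH : ∀ x ∈ H, projW x ∈ H' := by
      intro x hx
      have hx2 : (projW x : E) = x - projU x := by
        rw [eq_sub_iff_add_eq, add_comm]; exact hsum x
      show (projW x : E) ∈ H
      rw [hx2]
      exact H.sub_mem hx (hUH _ (projU x).2)
    have hc' : IsClosed (H' : Set W) := hc.preimage continuous_subtype_val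
    have hne' : H' ≠ ⊤ := by
      intro htop
      apply hne
      rw [AddSubgroup.eq_top_iff']
      intro x
      rw [← hsum x]
      refine H.add_mem (hUH _ (projU x).2) ?_
      have : projW x ∈ H' := htop ▸ AddSubgroup.mem_top _
      exact this
    have hrankW : finrank ℝ W < n := by
      have h1 : finrank ℝ U + finrank ℝ W = n := hrank ▸ Submodule.finrank_add_eq_of_isCompl hcompl
      have h2 : finrank ℝ U = 1 := finrank_span_singleton hu0
      omega
    obtain ⟨g, hg0, hgz⟩ := IH _ hrankW W rfl H' hc' hne'
    refine ⟨g ∘ₗ projW, ?_, ?_⟩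
    · obtain ⟨w, hw⟩ := DFunLike.ne_iff.1 hg0
      refine DFunLike.ne_iff.2 ⟨(w : E), ?_⟩
      intro h0
      apply hw
      rw [LinearMap.comp_apply] at h0
      rwa [hprojW, Submodule.projectionOnto_apply_left hcompl.symm w] at h0
    · intro h hh
      exact hgz _ (hprojH h hh)
  · -- H is discrete
    push_neg at hd
    obtain ⟨ε, hε, hsep⟩ := hd
    have hn : 0 < n := by
      rcases Nat.eq_zero_or_pos n with h0 | h
      · exfalso
        apply hne
        have hsub : Subsingleton E := finrank_zero_iff.1 (hrank.trans h0)
        rw [AddSubgroup.eq_top_iff']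
        intro x
        rw [Subsingleton.elim x (0 : E)]
        exact H.zero_mem
      · exact h
    set L : Submodule ℤ E := AddSubgroup.toIntSubmodule H with hL
    have hdisc : DiscreteTopology L := by
      rw [discreteTopology_iff_isOpen_singleton_zero]
      have hset : ({0} : Set L) = (Subtype.val) ⁻¹' (Metric.ball (0:E) ε) := by
        ext x
        simp only [mem_singleton_iff, mem_preimage, Metric.mem_ball, dist_zero_right]
        constructor
        · rintro rfl; simpa using hε
        · intro hx
          by_contra hx0
          exact absurd hx (hsep _ x.2 (fun h0 => hx0 (Subtype.ext h0))).not_gt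
      rw [hset]
      exact Metric.isOpen_ball.preimage continuous_subtype_val
    by_cases hspan : span ℝ (L : Set E) = ⊤
    · haveI : IsZLattice ℝ L := ⟨hspan⟩
      haveI := ZLattice.module_finite ℝ L
      haveI := ZLattice.module_free ℝ L
      set b := Module.Free.chooseBasis ℤ L with hb
      set B := b.ofZLatticeBasis ℝ L with hB
      have hnt : Nontrivial E := by
        have : 0 < finrank ℝ E := hrank ▸ hn
        exact Module.nontrivial_of_finrank_pos this
      obtain ⟨i⟩ := B.index_nonempty
      refine ⟨B.coord i, ?_, ?_⟩
      · intro h0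
        have h1 := DFunLike.congr_fun h0 (B i)
        simp [Basis.coord_apply] at h1
      · intro h hh
        refine ⟨b.repr ⟨h, hh⟩ i, ?_⟩
        have h2 := Basis.ofZLatticeBasis_repr_apply ℝ L b ⟨h, hh⟩ i
        simpa [Basis.coord_apply, ← hB] using h2
    · have hlt : span ℝ (L : Set E) < ⊤ := lt_top_iff_ne_top.2 hspan
      obtain ⟨f, hf0, hker⟩ := Submodule.exists_dual_map_eq_bot_of_lt_top hlt inferInstance
      refine ⟨f, hf0, fun h hh => ⟨0, ?_⟩⟩
      have hmem : f h ∈ (span ℝ (L : Set E)).map f := ⟨h, subset_span hh, rfl⟩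
      rw [hker] at hmem
      simpa using hmem

end Char

section Kron

/-- Kronecker's density theorem in dimension 3. -/
lemma dense_zspan (v : Fin 3 → ℝ)
    (hv : ∀ (z : ℤ) (c : Fin 3 → ℤ), ((z : ℝ) + ∑ i, (c i : ℝ) * v i = 0) →
      z = 0 ∧ ∀ i, c i = 0) :
    Dense ((AddSubgroup.closure (insert v (Set.range fun i => Pi.single i (1:ℝ)))) :
      Set (Fin 3 → ℝ)) := by
  by_contra hd
  set gens : Set (Fin 3 → ℝ) := insert v (Set.range fun i => Pi.single i (1:ℝ)) with hgens
  set H : AddSubgroup (Fin 3 → ℝ) := (AddSubgroup.closure gens).topologicalClosure with hH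
  have hHne : H ≠ ⊤ := by
    intro htop
    apply hd
    have : (H : Set (Fin 3 → ℝ)) = closure (AddSubgroup.closure gens : Set (Fin 3 → ℝ)) := rfl
    rw [dense_iff_closure_eq, ← this, htop]
    rfl
  obtain ⟨f, hf0, hfz⟩ := exists_int_char (finrank ℝ (Fin 3 → ℝ)) (Fin 3 → ℝ) rfl H
    (AddSubgroup.isClosed_topologicalClosure _) hHne
  have hsub : gens ⊆ (H : Set (Fin 3 → ℝ)) := fun x hx =>
    (AddSubgroup.le_topologicalClosure _) (AddSubgroup.subset_closure hx)
  have hvmem : v ∈ H := hsub (mem_insert _ _)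
  have hemem : ∀ i, Pi.single i (1:ℝ) ∈ H := fun i => hsub (mem_insert_of_mem _ ⟨i, rfl⟩)
  choose w hw using fun i => hfz _ (hemem i)
  obtain ⟨z, hz⟩ := hfz _ hvmem
  have hfe : ∀ x : Fin 3 → ℝ, f x = ∑ i, x i * f (Pi.single i 1) := by
    intro x
    conv_lhs => rw [← Finset.univ_sum_single x]
    rw [map_sum]
    congr 1
    ext i
    have h5 : Pi.single i (x i) = x i • (Pi.single i (1:ℝ) : Fin 3 → ℝ) := by
      rw [← Pi.single_smul, smul_eq_mul, mul_one]
    rw [h5, map_smul, smul_eq_mul]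
  have hrel : ((-z : ℤ) : ℝ) + ∑ i, (w i : ℝ) * v i = 0 := by
    have h1 : f v = ∑ i, v i * (w i : ℝ) := by
      rw [hfe v]
      congr 1
      ext i
      rw [hw i]
    push_cast
    rw [← hz, h1]
    rw [Finset.sum_congr rfl (fun i _ => mul_comm ((w i : ℝ)) (v i))]
    ring
  obtain ⟨hz0, hw0⟩ := hv (-z) w hrel
  apply hf0
  refine LinearMap.ext fun x => ?_
  rw [hfe x]
  simp only [hw]
  have h6 : ∀ i, (w i : ℝ) = 0 := fun i => by rw [hw0 i]; norm_num
  simp [h6]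

end Kron

section Torus

/-- Coordinatewise projection `ℝ³ → 𝕋³`. -/
noncomputable def pi3 : (Fin 3 → ℝ) →+ (Fin 3 → AddCircle (1:ℝ)) where
  toFun x := fun i => (x i : AddCircle (1:ℝ))
  map_zero' := by ext i; simp
  map_add' x y := by ext i; simp

lemma pi3_continuous : Continuous pi3 :=
  continuous_pi fun i => (AddCircle.continuous_mk' 1).comp (continuous_apply i)

lemma pi3_surjective : Function.Surjective pi3 := by
  intro y
  have h : ∀ i, ∃ r : ℝ, (r : AddCircle (1:ℝ)) = y i := fun i => Quotient.exists_rep (y i)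
  choose r hr using h
  exact ⟨r, funext fun i => hr i⟩

lemma dense_nsmul_orbit (v : Fin 3 → ℝ)
    (hv : ∀ (z : ℤ) (c : Fin 3 → ℤ), ((z : ℝ) + ∑ i, (c i : ℝ) * v i = 0) →
      z = 0 ∧ ∀ i, c i = 0) :
    Dense (Set.range fun n : ℕ => n • (pi3 v)) := by
  set vb := pi3 v with hvb
  set gens : Set (Fin 3 → ℝ) := insert v (Set.range fun i => Pi.single i (1:ℝ)) with hgens
  have hd1 : Dense (pi3 '' (AddSubgroup.closure gens : Set (Fin 3 → ℝ))) :=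
    pi3_surjective.denseRange.dense_image pi3_continuous (dense_zspan v hv)
  have hle : AddSubgroup.closure gens ≤ (AddSubgroup.zmultiples vb).comap pi3 := by
    rw [AddSubgroup.closure_le]
    intro g hg
    rcases hg with rfl | ⟨i, rfl⟩
    · exact AddSubgroup.mem_comap.2 (AddSubgroup.mem_zmultiples _)
    · refine AddSubgroup.mem_comap.2 ?_
      have h0 : pi3 ((Pi.single i (1:ℝ) : Fin 3 → ℝ)) = 0 := by
        ext j
        have hc : (((Pi.single i (1:ℝ) : Fin 3 → ℝ) j : ℝ) : AddCircle (1:ℝ)) = 0 := by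
          rcases eq_or_ne j i with rfl | hji
          · simp [AddCircle.coe_period]
          · simp [Pi.single_apply, hji]
        exact hc
      rw [h0]
      exact zero_mem _
  have hsubset : pi3 '' (AddSubgroup.closure gens : Set (Fin 3 → ℝ)) ⊆
      Set.range fun k : ℤ => k • vb := by
    rintro _ ⟨x, hx, rfl⟩
    obtain ⟨k, hk⟩ := AddSubgroup.mem_zmultiples_iff.1 (AddSubgroup.mem_comap.1 (hle hx))
    exact ⟨k, hk⟩
  have hd2 : Dense (Set.range fun k : ℤ => k • vb) := hd1.mono hsubset
  rw [dense_iff_closure_eq] at hd2 ⊢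
  rw [← closure_range_zsmul_eq_nsmul vb]
  exact hd2

end Torus

section Assemble

lemma dense_nsmul_orbit_from (v : Fin 3 → ℝ) (K : ℕ)
    (hv : ∀ (z : ℤ) (c : Fin 3 → ℤ), ((z : ℝ) + ∑ i, (c i : ℝ) * v i = 0) →
      z = 0 ∧ ∀ i, c i = 0) :
    Dense (Set.range fun n : ℕ => (K + n) • (pi3 v)) := by
  have hd := dense_nsmul_orbit v hv
  have himg : (Set.range fun n : ℕ => (K + n) • (pi3 v))
      = (fun y => K • (pi3 v) + y) '' (Set.range fun n : ℕ => n • pi3 v) := by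
    ext y
    simp only [Set.mem_image, Set.mem_range]
    constructor
    · rintro ⟨n, rfl⟩; exact ⟨n • pi3 v, ⟨n, rfl⟩, (add_nsmul _ K n).symm⟩
    · rintro ⟨_, ⟨n, rfl⟩, rfl⟩; exact ⟨n, add_nsmul _ K n⟩
  rw [himg]
  exact ((Homeomorph.addLeft (K • pi3 v)).surjective.denseRange).dense_image
    (Homeomorph.continuous _) hd

lemma ac_norm_eq (s : ℝ) : ‖(s : AddCircle (1:ℝ))‖ = |s - round s| := by
  rw [AddCircle.norm_eq]
  norm_num

lemma ac_norm_le (s : ℝ) : ‖(s : AddCircle (1:ℝ))‖ ≤ |s| := by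
  rw [ac_norm_eq]
  simpa using round_le s 0

lemma smul_pi3_apply (v : Fin 3 → ℝ) (k : ℕ) (i : Fin 3) :
    (k • pi3 v) i = ((k * v i : ℝ) : AddCircle (1:ℝ)) := by
  rw [← map_nsmul]
  show (((k • v) i : ℝ) : AddCircle (1:ℝ)) = _
  rw [Pi.smul_apply, nsmul_eq_mul]

end Assemble

/-- If `1, θ, α₁, θ·α₂` are linearly independent over `ℚ`, then `S` is dense in
`ℝ × (ℝ/ℤ) × (ℝ/ℤ)`. -/
theorem stmt12 (θ α₁ α₂ : ℝ) (hθ : 0 < θ)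
    (hα₁ : α₁ ∈ Set.Ioo (0 : ℝ) (1 / 2)) (hα₂ : α₂ ∈ Set.Ioo (0 : ℝ) (1 / 2))
    (hli : LinearIndependent ℚ ![(1 : ℝ), θ, α₁, θ * α₂]) :
    Dense (Sset θ α₁ α₂) := by
  set v : Fin 3 → ℝ := ![θ, α₁, θ * α₂] with hvdef
  have hv0 : v 0 = θ := rfl
  have hv1 : v 1 = α₁ := rfl
  have hv2 : v 2 = θ * α₂ := rfl
  have hv : ∀ (z : ℤ) (c : Fin 3 → ℤ),
      ((z : ℝ) + ∑ i, (c i : ℝ) * v i = 0) → z = 0 ∧ ∀ i, c i = 0 := by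
    intro z c h
    rw [Fin.sum_univ_three, hv0, hv1, hv2] at h
    have h4 := Fintype.linearIndependent_iff.1 hli ![(z:ℚ), (c 0 : ℚ), (c 1 : ℚ), (c 2 : ℚ)]
    have hsum : ∑ i, (![(z:ℚ), (c 0 : ℚ), (c 1 : ℚ), (c 2 : ℚ)]) i • (![(1:ℝ), θ, α₁, θ * α₂]) i
        = 0 := by
      rw [Fin.sum_univ_four]
      simp only [Matrix.cons_val_zero, Matrix.cons_val_one, Matrix.head_cons,
        Matrix.cons_val_two, Matrix.tail_cons, Matrix.cons_val_three, Rat.smul_def]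
      push_cast
      linarith [h]
    have h5 := h4 hsum
    constructor
    · have := h5 0
      simp only [Matrix.cons_val_zero] at this
      exact_mod_cast this
    · intro i
      fin_cases i
      · have := h5 1
        simp only [Matrix.cons_val_one, Matrix.head_cons] at this
        simpa using this
      · have := h5 2
        simp only [Matrix.cons_val_two, Matrix.tail_cons, Matrix.head_cons] at this
        simpa using this
      · have := h5 3
        simp only [Matrix.cons_val_three, Matrix.tail_cons, Matrix.head_cons] at this
        simpa using this
  rw [Metric.dense_iff]
  rintro ⟨x, a, b⟩ r hr
  set δ : ℝ := min (r/4) (1/2) with hδdef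
  have hδpos : 0 < δ := lt_min (by linarith) one_half_pos
  have hδr : δ ≤ r/4 := min_le_left _ _
  have hδh : δ ≤ 1/2 := min_le_right _ _
  obtain ⟨K, hK⟩ := exists_nat_gt ((|x| + 1)/θ)
  have hKθ : |x| + 1 < K * θ := by rwa [div_lt_iff₀ hθ] at hK
  set τ : Fin 3 → AddCircle (1:ℝ) :=
    ![((-x : ℝ) : AddCircle (1:ℝ)), a, b - ((x * α₂ : ℝ) : AddCircle (1:ℝ))] with hτdef
  obtain ⟨y, hyb, hymem⟩ := Metric.dense_iff.1 (dense_nsmul_orbit_from v K hv) τ δ hδpos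
  obtain ⟨n, hyn⟩ := hymem
  set k : ℕ := K + n with hk
  have hco : ∀ i, dist ((k • pi3 v) i) (τ i) < δ := by
    intro i
    have hyb' : dist (k • pi3 v) τ < δ := by
      rw [← hyn] at hyb
      simpa [hk] using Metric.mem_ball.1 hyb
    calc dist ((k • pi3 v) i) (τ i) ≤ dist (k • pi3 v) τ := dist_le_pi_dist _ _ i
    _ < δ := hyb'
  -- first coordinate analysis
  have h0 : ‖(((k * θ + x : ℝ)) : AddCircle (1:ℝ))‖ < δ := by
    have h := hco 0
    rw [smul_pi3_apply, hv0] at h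
    have hτ0 : τ 0 = ((-x : ℝ) : AddCircle (1:ℝ)) := rfl
    rw [hτ0, dist_eq_norm] at h
    have heq0 : ((k * θ : ℝ) : AddCircle (1:ℝ)) - ((-x : ℝ) : AddCircle (1:ℝ))
        = (((k * θ + x : ℝ)) : AddCircle (1:ℝ)) := by
      rw [← AddCircle.coe_sub]
      congr 1
      ring
    rwa [heq0] at h
  set m0 : ℤ := round ((k : ℝ) * θ + x) with hm0def
  have he : |(k : ℝ) * θ + x - m0| < δ := by
    rw [ac_norm_eq] at h0
    exact h0
  have hkK : (K : ℝ) * θ ≤ (k : ℝ) * θ := by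
    have : (K : ℝ) ≤ (k : ℝ) := by exact_mod_cast Nat.le_add_right K n
    exact mul_le_mul_of_nonneg_right this hθ.le
  have hbig : (1 : ℝ) < (k : ℝ) * θ + x := by
    have hx : -|x| ≤ x := neg_abs_le x
    linarith
  have hm0pos : (0 : ℝ) < m0 := by
    have : (m0 : ℝ) > (k : ℝ) * θ + x - δ := by
      have := abs_lt.1 he
      linarith [this.2]
    linarith
  have hm0nonneg : 0 ≤ m0 := by exact_mod_cast hm0pos.le
  set m : ℕ := m0.toNat with hmdef
  have hmcast : (m : ℝ) = (m0 : ℝ) := by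
    rw [hmdef]
    exact_mod_cast congrArg (Int.cast : ℤ → ℝ) (Int.toNat_of_nonneg hm0nonneg)
  set e : ℝ := (k : ℝ) * θ + x - m0 with hedef
  have he' : |e| < δ := he
  -- second coordinate
  have h1 : dist (((k * α₁ : ℝ)) : AddCircle (1:ℝ)) a < δ := by
    have h := hco 1
    rwa [smul_pi3_apply, hv1] at h
  -- third coordinate
  have h2 : dist (((k * (θ * α₂) : ℝ)) : AddCircle (1:ℝ))
      (b - ((x * α₂ : ℝ) : AddCircle (1:ℝ))) < δ := by
    have h := hco 2
    rwa [smul_pi3_apply, hv2] at h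
  have h3 : dist (((m * α₂ : ℝ)) : AddCircle (1:ℝ)) b < 3 * δ / 2 := by
    have hmal : (m : ℝ) * α₂ = (k : ℝ) * (θ * α₂) + x * α₂ - e * α₂ := by
      rw [hmcast]
      have : (m0 : ℝ) = (k : ℝ) * θ + x - e := by rw [hedef]; ring
      rw [this]
      ring
    have key1 : dist (((m * α₂ : ℝ)) : AddCircle (1:ℝ))
        ((((k * (θ * α₂) : ℝ)) : AddCircle (1:ℝ)) + ((x * α₂ : ℝ) : AddCircle (1:ℝ)))
        ≤ |e| * α₂ := by
      rw [dist_eq_norm]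
      have heq : (((m * α₂ : ℝ)) : AddCircle (1:ℝ))
          - ((((k * (θ * α₂) : ℝ)) : AddCircle (1:ℝ)) + ((x * α₂ : ℝ) : AddCircle (1:ℝ)))
          = (((-(e * α₂) : ℝ)) : AddCircle (1:ℝ)) := by
        rw [← AddCircle.coe_add, ← AddCircle.coe_sub]
        congr 1
        rw [hmal]
        ring
      rw [heq]
      calc ‖(((-(e * α₂) : ℝ)) : AddCircle (1:ℝ))‖ ≤ |(-(e * α₂))| := ac_norm_le _
        _ = |e| * α₂ := by rw [abs_neg, abs_mul, abs_of_pos hα₂.1]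
    have key2 : dist ((((k * (θ * α₂) : ℝ)) : AddCircle (1:ℝ))
        + ((x * α₂ : ℝ) : AddCircle (1:ℝ))) b < δ := by
      have hb : b = (b - ((x * α₂ : ℝ) : AddCircle (1:ℝ))) + ((x * α₂ : ℝ) : AddCircle (1:ℝ)) := by
        rw [sub_add_cancel]
      rw [hb, dist_add_right]
      exact h2
    have hea : |e| * α₂ < δ / 2 := by
      have h6 : |e| * α₂ ≤ |e| * (1/2) := by
        apply mul_le_mul_of_nonneg_left hα₂.2.le (abs_nonneg e)
      nlinarith [he', abs_nonneg e]
    calc dist (((m * α₂ : ℝ)) : AddCircle (1:ℝ)) b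
        ≤ dist (((m * α₂ : ℝ)) : AddCircle (1:ℝ))
            ((((k * (θ * α₂) : ℝ)) : AddCircle (1:ℝ)) + ((x * α₂ : ℝ) : AddCircle (1:ℝ)))
          + dist ((((k * (θ * α₂) : ℝ)) : AddCircle (1:ℝ))
            + ((x * α₂ : ℝ) : AddCircle (1:ℝ))) b := dist_triangle _ _ _
      _ ≤ |e| * α₂ + dist ((((k * (θ * α₂) : ℝ)) : AddCircle (1:ℝ))
            + ((x * α₂ : ℝ) : AddCircle (1:ℝ))) b := by linarith [key1]
      _ < δ / 2 + δ := by linarith [key2, hea]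
      _ ≤ 3 * δ / 2 := by linarith
  -- assemble the point
  refine ⟨((m : ℝ) - (k : ℝ) * θ, (((k : ℝ) * α₁ : ℝ) : AddCircle (1:ℝ)),
    (((m : ℝ) * α₂ : ℝ) : AddCircle (1:ℝ))), ?_, ⟨k, m, rfl⟩⟩
  rw [Metric.mem_ball, Prod.dist_eq, Prod.dist_eq]
  have d1 : dist ((m : ℝ) - (k : ℝ) * θ) x < r := by
    rw [Real.dist_eq]
    have : (m : ℝ) - (k : ℝ) * θ - x = -e := by rw [hedef, hmcast]; ring
    rw [this, abs_neg]
    linarith [he']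
  have d2 : dist ((((k : ℝ) * α₁ : ℝ)) : AddCircle (1:ℝ)) a < r := by
    calc dist ((((k : ℝ) * α₁ : ℝ)) : AddCircle (1:ℝ)) a < δ := h1
      _ ≤ r/4 := hδr
      _ < r := by linarith
  have d3 : dist ((((m : ℝ) * α₂ : ℝ)) : AddCircle (1:ℝ)) b < r := by
    calc dist ((((m : ℝ) * α₂ : ℝ)) : AddCircle (1:ℝ)) b < 3 * δ / 2 := h3
      _ ≤ 3 * (r/4) / 2 := by linarith
      _ < r := by linarith
  exact max_lt d1 (max_lt d2 d3)
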